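/- arXiv:2402.10190 — 2 statements merged into one kernel-verified Lean document; each statement's English description precedes it below -/
import Mathlib

section
/- Let 0 < r₁ < r₂, Q₁ < Q₂, 0 ≤ Q₁, and let Q̌ : [r₁, r₂] → ℝ be continuous with Q₁ ≤ Q̌(r) ≤ Q₂ for all r. Define ϖ̌(r) = ϖ₁ + Q̌(r)²/(2r) - Q₁²/(2r₁) + (1/2)∫_{r₁}^{r} Q̌(r')²/r'² dr', and D(r) = 1 - 2ϖ̌(r)/r + Q̌(r)²/r². If the polynomial condition min_{r ∈ [r₁,r₂]} (r₁ r² - 2ϖ₁ r₁ r + Q₁² r - Q₂² r + Q₂² r₁) > 0 holds, then D(r) > 0 for all r ∈ [r₁, r₂]. -/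
/-- Positivity of the Reissner–Nordström-type coefficient `D` along the bounce
hypersurface, given the polynomial condition on the admissible parameters. -/
theorem stmt1 (r₁ r₂ Q₁ Q₂ ϖ₁ : ℝ) (hr₁ : 0 < r₁) (hr₁₂ : r₁ < r₂)
    (hQ : Q₁ < Q₂) (hQ₁ : 0 ≤ Q₁) (hϖ₁ : 0 ≤ ϖ₁)
    (Qc : ℝ → ℝ) (hQcont : ContinuousOn Qc (Set.Icc r₁ r₂))
    (hQbound : ∀ r ∈ Set.Icc r₁ r₂, Q₁ ≤ Qc r ∧ Qc r ≤ Q₂)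
    (hpoly : ∀ r ∈ Set.Icc r₁ r₂,
      0 < r₁ * r ^ 2 - 2 * ϖ₁ * r₁ * r + Q₁ ^ 2 * r - Q₂ ^ 2 * r + Q₂ ^ 2 * r₁) :
    ∀ r ∈ Set.Icc r₁ r₂,
      0 < 1 - 2 * (ϖ₁ + (Qc r) ^ 2 / (2 * r) - Q₁ ^ 2 / (2 * r₁)
            + (1 / 2) * ∫ s in r₁..r, (Qc s) ^ 2 / s ^ 2) / r
          + (Qc r) ^ 2 / r ^ 2 := by
  intro r hr
  obtain ⟨hr1r, hrr2⟩ := hr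
  have hrpos : 0 < r := hr₁.trans_le hr1r
  have huIcc : Set.uIcc r₁ r = Set.Icc r₁ r := Set.uIcc_of_le hr1r
  have hsub : Set.uIcc r₁ r ⊆ Set.Icc r₁ r₂ := by
    rw [huIcc]; exact Set.Icc_subset_Icc le_rfl hrr2
  have hcont : ContinuousOn (fun s => (Qc s) ^ 2 / s ^ 2) (Set.uIcc r₁ r) := by
    apply ContinuousOn.div ((hQcont.mono hsub).pow 2) (continuousOn_id.pow 2)
    intro s hs
    have : 0 < s := by
      rw [huIcc] at hs
      exact hr₁.trans_le hs.1
    exact pow_ne_zero 2 (ne_of_gt this)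
  have hint : IntervalIntegrable (fun s => (Qc s) ^ 2 / s ^ 2) MeasureTheory.volume r₁ r :=
    hcont.intervalIntegrable
  have hcont2 : ContinuousOn (fun s : ℝ => Q₂ ^ 2 / s ^ 2) (Set.uIcc r₁ r) := by
    apply ContinuousOn.div continuousOn_const (continuousOn_id.pow 2)
    intro s hs
    have : 0 < s := by
      rw [huIcc] at hs
      exact hr₁.trans_le hs.1
    exact pow_ne_zero 2 (ne_of_gt this)
  have hint2 : IntervalIntegrable (fun s : ℝ => Q₂ ^ 2 / s ^ 2) MeasureTheory.volume r₁ r :=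
    hcont2.intervalIntegrable
  have hmono : (∫ s in r₁..r, (Qc s) ^ 2 / s ^ 2) ≤ ∫ s in r₁..r, Q₂ ^ 2 / s ^ 2 := by
    apply intervalIntegral.integral_mono_on hr1r hint hint2
    intro s hs
    have hq := hQbound s ⟨hs.1, hs.2.trans hrr2⟩
    have hspos : 0 < s := hr₁.trans_le hs.1
    have hn : (Qc s) ^ 2 ≤ Q₂ ^ 2 := by nlinarith [hq.1, hq.2]
    exact (div_le_div_iff_of_pos_right (by positivity)).mpr hn
  have hval : (∫ s in r₁..r, Q₂ ^ 2 / s ^ 2) = Q₂ ^ 2 * (1 / r₁ - 1 / r) := by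
    have h0 : (0 : ℝ) ∉ Set.uIcc r₁ r := by
      rw [huIcc]
      intro h
      exact absurd h.1 (not_le.2 hr₁)
    have hz : (∫ s in r₁..r, (s : ℝ) ^ (-2 : ℤ)) = 1 / r₁ - 1 / r := by
      rw [integral_zpow (Or.inr ⟨by decide, h0⟩)]
      have hrne : r ≠ 0 := ne_of_gt hrpos
      have hr1ne : r₁ ≠ 0 := ne_of_gt hr₁
      norm_num
      field_simp
      ring
    calc (∫ s in r₁..r, Q₂ ^ 2 / s ^ 2)
        = ∫ s in r₁..r, Q₂ ^ 2 * (s : ℝ) ^ (-2 : ℤ) := by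
          congr 1
      _ = Q₂ ^ 2 * ∫ s in r₁..r, (s : ℝ) ^ (-2 : ℤ) := intervalIntegral.integral_const_mul _ _
      _ = Q₂ ^ 2 * (1 / r₁ - 1 / r) := by rw [hz]
  set I := ∫ s in r₁..r, (Qc s) ^ 2 / s ^ 2 with hI
  have hIle : I ≤ Q₂ ^ 2 * (1 / r₁ - 1 / r) := hval ▸ hmono
  have e : r₁ * r * (Q₂ ^ 2 * (1 / r₁ - 1 / r)) = Q₂ ^ 2 * r - Q₂ ^ 2 * r₁ := by
    field_simp
  have hP := hpoly r ⟨hr1r, hrr2⟩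
  have key : 0 < r₁ * r ^ 2 - 2 * ϖ₁ * r₁ * r + Q₁ ^ 2 * r - r₁ * r * I := by
    have := mul_le_mul_of_nonneg_left hIle (le_of_lt (mul_pos hr₁ hrpos))
    nlinarith [this, e, hP]
  have hgoal : 1 - 2 * (ϖ₁ + (Qc r) ^ 2 / (2 * r) - Q₁ ^ 2 / (2 * r₁)
            + (1 / 2) * I) / r + (Qc r) ^ 2 / r ^ 2
      = (r₁ * r ^ 2 - 2 * ϖ₁ * r₁ * r + Q₁ ^ 2 * r - r₁ * r * I) / (r₁ * r ^ 2) := by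
    field_simp
    ring
  rw [hgoal]
  exact div_pos key (by positivity)
end

section
/- Let Q₁ < Q₂ and 0 < r₁ < r₂, and for ξ ∈ ℝ define Π(ξ) = ϖ₁ + Q₂²/(2r₂) - Q₁²/(2r₁) + ∫_{r₁}^{r₂} Q̌(r,ξ)²/(2r²) dr, where Q̌(r,ξ) = Q₁ + (Q₂ - Q₁)·ψ(log((r - r₁)/(r₂ - r)), ξ) and ψ is a smooth function with ∂ψ/∂ξ < 0, ψ → 0 pointwise as ξ → +∞, ψ → 1 pointwise as ξ → -∞, and 0 < ψ < 1. Then Π is strictly decreasing in ξ, lim_{ξ→+∞} Π(ξ) = ϖ₁ + (Q₂² - Q₁²)/(2r₂), and lim_{ξ→-∞} Π(ξ) = ϖ₁ + (Q₂² - Q₁²)/(2r₁). Consequently, if 2r₁(ϖ₂ - ϖ₁) < Q₂² - Q₁² < 2r₂(ϖ₂ - ϖ₁), there is a unique ξ* with Π(ξ*) = ϖ₂. -/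
open Filter
open MeasureTheory

/-- The final-mass functional `Π(ξ)` of the charge profile `Q̌(·,ξ)` is strictly
decreasing in the modulation parameter `ξ`, with explicit limits at `±∞`; hence for
admissible target mass `ϖ₂` there is a unique `ξ*` with `Π(ξ*) = ϖ₂`. -/
theorem stmt5 (r₁ r₂ Q₁ Q₂ ϖ₁ ϖ₂ : ℝ) (hr₁ : 0 < r₁) (hr₁₂ : r₁ < r₂)
    (hQ : Q₁ < Q₂) (hQ₁ : 0 ≤ Q₁)
    (ψ : ℝ → ℝ → ℝ)
    (hψcont : Continuous fun p : ℝ × ℝ => ψ p.1 p.2)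
    (hψdiff : ∀ x : ℝ, Differentiable ℝ (ψ x))
    (hψderiv : ∀ x ξ : ℝ, deriv (ψ x) ξ < 0)
    (hψ01 : ∀ x ξ : ℝ, 0 < ψ x ξ ∧ ψ x ξ < 1)
    (hψtop : ∀ x : ℝ, Tendsto (ψ x) atTop (nhds 0))
    (hψbot : ∀ x : ℝ, Tendsto (ψ x) atBot (nhds 1)) :
    let Qc : ℝ → ℝ → ℝ := fun r ξ =>
      Q₁ + (Q₂ - Q₁) * ψ (Real.log ((r - r₁) / (r₂ - r))) ξ
    let Pmap : ℝ → ℝ := fun ξ =>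
      ϖ₁ + Q₂ ^ 2 / (2 * r₂) - Q₁ ^ 2 / (2 * r₁)
        + ∫ r in r₁..r₂, (Qc r ξ) ^ 2 / (2 * r ^ 2)
    StrictAnti Pmap ∧
      Tendsto Pmap atTop (nhds (ϖ₁ + (Q₂ ^ 2 - Q₁ ^ 2) / (2 * r₂))) ∧
      Tendsto Pmap atBot (nhds (ϖ₁ + (Q₂ ^ 2 - Q₁ ^ 2) / (2 * r₁))) ∧
      (2 * r₁ * (ϖ₂ - ϖ₁) < Q₂ ^ 2 - Q₁ ^ 2 → Q₂ ^ 2 - Q₁ ^ 2 < 2 * r₂ * (ϖ₂ - ϖ₁) →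
        ∃! ξ : ℝ, Pmap ξ = ϖ₂) := by
  intro Qc Pmap
  have hr₂ : (0:ℝ) < r₂ := hr₁.trans hr₁₂
  have hQd : (0:ℝ) < Q₂ - Q₁ := sub_pos.mpr hQ
  have hQ₂ : (0:ℝ) < Q₂ := lt_of_le_of_lt hQ₁ hQ
  set g : ℝ → ℝ := fun r => Real.log ((r - r₁) / (r₂ - r)) with hg
  -- bounds on Qc
  have hQcLB : ∀ r ξ, Q₁ ≤ Qc r ξ := fun r ξ =>
    le_add_of_nonneg_right (mul_nonneg hQd.le (hψ01 _ ξ).1.le)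
  have hQcUB : ∀ r ξ, Qc r ξ ≤ Q₂ := by
    intro r ξ
    have := (hψ01 (g r) ξ).2
    have : (Q₂ - Q₁) * ψ (g r) ξ ≤ (Q₂ - Q₁) * 1 :=
      mul_le_mul_of_nonneg_left this.le hQd.le
    simpa [Qc] using by linarith [this]
  -- measurability
  have hψξcont : ∀ ξ, Continuous fun x => ψ x ξ := fun ξ =>
    hψcont.comp (continuous_id.prodMk continuous_const)
  have hψxcont : ∀ x, Continuous (ψ x) := fun x =>
    hψcont.comp (continuous_const.prodMk continuous_id)
  have hgmeas : Measurable g :=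
    Real.measurable_log.comp ((measurable_id.sub measurable_const).div
      (measurable_const.sub measurable_id))
  have hmeas : ∀ ξ, Measurable (fun r => (Qc r ξ) ^ 2 / (2 * r ^ 2)) := by
    intro ξ
    have h2 : Measurable fun r : ℝ => ψ (g r) ξ := (hψξcont ξ).measurable.comp hgmeas
    have : Measurable fun r => Qc r ξ := measurable_const.add (h2.const_mul _)
    exact (this.pow_const 2).div ((measurable_id.pow_const 2).const_mul 2)
  -- bound
  have hbnd : ∀ ξ, ∀ r ∈ Set.Ioc r₁ r₂, ‖(Qc r ξ) ^ 2 / (2 * r ^ 2)‖ ≤ Q₂ ^ 2 / (2 * r₁ ^ 2) := by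
    intro ξ r hr
    have hr0 : (0:ℝ) < r := hr₁.trans hr.1
    have h1 : (Qc r ξ) ^ 2 ≤ Q₂ ^ 2 :=
      pow_le_pow_left₀ (hQ₁.trans (hQcLB r ξ)) (hQcUB r ξ) 2
    have h2 : (0:ℝ) < 2 * r ^ 2 := by positivity
    have h3 : 2 * r₁ ^ 2 ≤ 2 * r ^ 2 := by nlinarith [hr.1.le]
    rw [Real.norm_eq_abs, abs_of_nonneg (by positivity)]
    exact div_le_div₀ (by positivity) h1 (by positivity) h3
  have hInt : ∀ ξ, IntervalIntegrable (fun r => (Qc r ξ) ^ 2 / (2 * r ^ 2)) volume r₁ r₂ := by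
    intro ξ
    rw [intervalIntegrable_iff, Set.uIoc_of_le hr₁₂.le]
    exact Measure.integrableOn_of_bounded (measure_Ioc_lt_top).ne
      (hmeas ξ).aestronglyMeasurable
      ((ae_restrict_iff' measurableSet_Ioc).mpr (ae_of_all _ (hbnd ξ)))
  -- exact integral of c/(2 r^2)
  have hIntConst : ∀ c : ℝ, (∫ r in r₁..r₂, c / (2 * r ^ 2)) = c / (2 * r₁) - c / (2 * r₂) := by
    intro c
    have hder : ∀ x ∈ Set.uIcc r₁ r₂, HasDerivAt (fun y => -(c / 2) * y⁻¹) (c / (2 * x ^ 2)) x := by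
      intro x hx
      rw [Set.uIcc_of_le hr₁₂.le] at hx
      have hx0 : x ≠ 0 := (hr₁.trans_le hx.1).ne'
      have := (hasDerivAt_inv hx0).const_mul (-(c / 2))
      rw [show c / (2 * x ^ 2) = -(c / 2) * -(x ^ 2)⁻¹ by ring]
      exact this
    have hcont : ContinuousOn (fun r : ℝ => c / (2 * r ^ 2)) (Set.uIcc r₁ r₂) := by
      apply continuousOn_const.div (by fun_prop)
      intro x hx
      rw [Set.uIcc_of_le hr₁₂.le] at hx
      have : (0:ℝ) < x := hr₁.trans_le hx.1
      positivity
    rw [intervalIntegral.integral_eq_sub_of_hasDerivAt hder (hcont.intervalIntegrable)]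
    field_simp
    ring
  -- dominated convergence helper
  have hTend : ∀ (l : Filter ℝ), l.IsCountablyGenerated → ∀ (G : ℝ → ℝ),
      (∀ r ∈ Set.Ioc r₁ r₂, Tendsto (fun ξ => (Qc r ξ) ^ 2 / (2 * r ^ 2)) l (nhds (G r))) →
      Tendsto (fun ξ => ∫ r in r₁..r₂, (Qc r ξ) ^ 2 / (2 * r ^ 2)) l
        (nhds (∫ r in r₁..r₂, G r)) := by
    intro l hl G hptw
    haveI := hl
    apply intervalIntegral.tendsto_integral_filter_of_dominated_convergence
      (fun _ => Q₂ ^ 2 / (2 * r₁ ^ 2))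
    · exact Eventually.of_forall fun ξ => ((hmeas ξ).aestronglyMeasurable).restrict
    · refine Eventually.of_forall fun ξ => ae_of_all _ fun r hr => ?_
      rw [Set.uIoc_of_le hr₁₂.le] at hr
      exact hbnd ξ r hr
    · exact intervalIntegrable_const
    · refine ae_of_all _ fun r hr => ?_
      rw [Set.uIoc_of_le hr₁₂.le] at hr
      exact hptw r hr
  -- pointwise limits
  have hptwQ : ∀ (l : Filter ℝ) (c : ℝ), (∀ x, Tendsto (ψ x) l (nhds c)) →
      ∀ r ∈ Set.Ioc r₁ r₂, Tendsto (fun ξ => (Qc r ξ) ^ 2 / (2 * r ^ 2)) l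
        (nhds ((Q₁ + (Q₂ - Q₁) * c) ^ 2 / (2 * r ^ 2))) := by
    intro l c hc r _
    have h1 : Tendsto (fun ξ => Qc r ξ) l (nhds (Q₁ + (Q₂ - Q₁) * c)) :=
      tendsto_const_nhds.add (tendsto_const_nhds.mul (hc (g r)))
    exact (h1.pow 2).div_const _
  -- StrictAnti
  have hSA : StrictAnti Pmap := by
    intro ξ ξ' hlt
    have hdiff : 0 < ∫ r in r₁..r₂, ((Qc r ξ) ^ 2 / (2 * r ^ 2) - (Qc r ξ') ^ 2 / (2 * r ^ 2)) := by
      apply intervalIntegral.intervalIntegral_pos_of_pos_on ((hInt ξ).sub (hInt ξ')) _ hr₁₂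
      intro r hr
      have hr0 : (0:ℝ) < r := hr₁.trans hr.1
      have hψa : StrictAnti (ψ (g r)) := strictAnti_of_deriv_neg (hψderiv (g r))
      have h1 : Qc r ξ' < Qc r ξ := by
        have := hψa hlt
        have := mul_lt_mul_of_pos_left this hQd
        simp only [Qc]
        linarith
      have h0 : 0 ≤ Qc r ξ' := hQ₁.trans (hQcLB r ξ')
      have h2 : (Qc r ξ') ^ 2 < (Qc r ξ) ^ 2 := by nlinarith
      have h3 : (0:ℝ) < 2 * r ^ 2 := by positivity
      exact sub_pos.mpr ((div_lt_div_iff_of_pos_right h3).mpr h2)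
    rw [intervalIntegral.integral_sub (hInt ξ) (hInt ξ')] at hdiff
    simp only [Pmap]
    linarith
  -- limits
  have hvalTop : ((Q₁ + (Q₂ - Q₁) * 0) ^ 2 : ℝ) = Q₁ ^ 2 := by ring
  have hTop : Tendsto Pmap atTop (nhds (ϖ₁ + (Q₂ ^ 2 - Q₁ ^ 2) / (2 * r₂))) := by
    have h := hTend atTop inferInstance (fun r => Q₁ ^ 2 / (2 * r ^ 2))
      (by
        intro r hr
        have := hptwQ atTop 0 hψtop r hr
        simpa [hvalTop] using this)
    rw [hIntConst] at h
    have : ϖ₁ + Q₂ ^ 2 / (2 * r₂) - Q₁ ^ 2 / (2 * r₁) + (Q₁ ^ 2 / (2 * r₁) - Q₁ ^ 2 / (2 * r₂))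
        = ϖ₁ + (Q₂ ^ 2 - Q₁ ^ 2) / (2 * r₂) := by field_simp; ring
    simpa [Pmap, this] using (tendsto_const_nhds.add h : Tendsto (fun ξ =>
      (ϖ₁ + Q₂ ^ 2 / (2 * r₂) - Q₁ ^ 2 / (2 * r₁)) +
        ∫ r in r₁..r₂, (Qc r ξ) ^ 2 / (2 * r ^ 2)) atTop _)
  have hvalBot : ((Q₁ + (Q₂ - Q₁) * 1) ^ 2 : ℝ) = Q₂ ^ 2 := by ring
  have hBot : Tendsto Pmap atBot (nhds (ϖ₁ + (Q₂ ^ 2 - Q₁ ^ 2) / (2 * r₁))) := by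
    have h := hTend atBot inferInstance (fun r => Q₂ ^ 2 / (2 * r ^ 2))
      (by
        intro r hr
        have := hptwQ atBot 1 hψbot r hr
        simpa [hvalBot] using this)
    rw [hIntConst] at h
    have : ϖ₁ + Q₂ ^ 2 / (2 * r₂) - Q₁ ^ 2 / (2 * r₁) + (Q₂ ^ 2 / (2 * r₁) - Q₂ ^ 2 / (2 * r₂))
        = ϖ₁ + (Q₂ ^ 2 - Q₁ ^ 2) / (2 * r₁) := by field_simp; ring
    simpa [Pmap, this] using (tendsto_const_nhds.add h : Tendsto (fun ξ =>
      (ϖ₁ + Q₂ ^ 2 / (2 * r₂) - Q₁ ^ 2 / (2 * r₁)) +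
        ∫ r in r₁..r₂, (Qc r ξ) ^ 2 / (2 * r ^ 2)) atBot _)
  -- continuity
  have hPcont : Continuous Pmap := by
    rw [continuous_iff_continuousAt]
    intro ξ₀
    have h := hTend (nhds ξ₀) inferInstance (fun r => (Qc r ξ₀) ^ 2 / (2 * r ^ 2))
      (by
        intro r _
        have h1 : Tendsto (fun ξ => Qc r ξ) (nhds ξ₀) (nhds (Qc r ξ₀)) :=
          tendsto_const_nhds.add (tendsto_const_nhds.mul ((hψxcont (g r)).tendsto ξ₀))
        exact (h1.pow 2).div_const _)
    exact (tendsto_const_nhds.add h : _)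
  refine ⟨hSA, hTop, hBot, ?_⟩
  intro h1 h2
  have hϖ₂top : ϖ₁ + (Q₂ ^ 2 - Q₁ ^ 2) / (2 * r₂) < ϖ₂ := by
    have : (Q₂ ^ 2 - Q₁ ^ 2) / (2 * r₂) < ϖ₂ - ϖ₁ :=
      (div_lt_iff₀ (by positivity)).mpr (by linarith)
    linarith
  have hϖ₂bot : ϖ₂ < ϖ₁ + (Q₂ ^ 2 - Q₁ ^ 2) / (2 * r₁) := by
    have : ϖ₂ - ϖ₁ < (Q₂ ^ 2 - Q₁ ^ 2) / (2 * r₁) :=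
      (lt_div_iff₀ (by positivity)).mpr (by linarith)
    linarith
  obtain ⟨a, ha⟩ := (hTop.eventually_lt_const hϖ₂top).exists
  obtain ⟨b, hb⟩ := (hBot.eventually_const_lt hϖ₂bot).exists
  obtain ⟨ξ, -, hξ⟩ := intermediate_value_uIcc (hPcont.continuousOn (s := Set.uIcc b a))
    (Set.mem_uIcc.mpr (Or.inr ⟨ha.le, hb.le⟩))
  exact ⟨ξ, hξ, fun y hy => hSA.injective (hy.trans hξ.symm)⟩
end
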